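/- Let Q ⊂ S¹ be the set of points of the form aπ/2ⁿ (a, n integers, n ≥ 0), and φ: Q → S¹ a cyclic-order-preserving injection. Then φ extends to an orientation preserving homeomorphism of S¹ if and only if for every ε > 0 there exists n ∈ ℕ such that for all a ∈ ℤ, the distance between φ(aπ/2ⁿ) and φ((a−1)π/2ⁿ) in S¹ is less than ε. -/

import Mathlib

open Real

instance : Fact (0 < 2 * Real.pi) := ⟨by positivity⟩

/-- The set Q ⊂ S¹ of dyadic points aπ/2ⁿ. -/
def DyadicQ : Set (AddCircle (2 * Real.pi)) :=
  {q | ∃ (a : ℤ) (n : ℕ), q = (((a : ℝ) * Real.pi / 2 ^ n : ℝ) : AddCircle (2 * Real.pi))}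

namespace Stmt11Aux

lemma hp : (0:ℝ) < 2 * Real.pi := Real.two_pi_pos

section btwhelp
variable {α : Type*} [CircularOrder α] (a b : α)

lemma btw_self_left : btw a a b := by
  rcases btw_total a a b with h | h
  · exact h
  · exact btw_cyclic_left h

lemma btw_self_right : btw a b b := by
  rcases btw_total a b b with h | h
  · exact h
  · exact btw_cyclic_left (btw_cyclic_left h)

lemma btw_self_outer : btw a b a := by
  rcases btw_total a b a with h | h
  · exact h
  · exact h

end btwhelp

lemma modeq_iff_coe_eq {x y : ℝ} :
    x ≡ y [PMOD (2 * Real.pi)] ↔ (y : AddCircle (2 * Real.pi)) = x :=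
  AddCommGroup.modEq_iff_eq_mod_zmultiples.trans eq_comm

lemma sbtw_coe_iff {x y z : ℝ} :
    sbtw (x : AddCircle (2 * Real.pi)) (y : AddCircle (2 * Real.pi)) (z : AddCircle (2 * Real.pi)) ↔
      toIocMod hp x y < toIocMod hp x z ∧ toIocMod hp x z < x + 2 * Real.pi := by
  have hby := toIocMod_mem_Ioc hp x y
  have hbz := toIocMod_mem_Ioc hp x z
  rw [sbtw_iff_btw_not_btw]
  constructor
  · rintro ⟨h1, h2⟩
    have hxz : ¬ x ≡ z [PMOD (2 * Real.pi)] := by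
      intro hmod
      rw [modeq_iff_coe_eq] at hmod
      rw [hmod] at h2
      exact h2 (btw_self_outer _ _)
    have hxy : ¬ x ≡ y [PMOD (2 * Real.pi)] := by
      intro hmod
      rw [modeq_iff_coe_eq] at hmod
      rw [hmod] at h2
      exact h2 (btw_self_right _ _)
    have hyz : ¬ y ≡ z [PMOD (2 * Real.pi)] := by
      intro hmod
      rw [modeq_iff_coe_eq] at hmod
      rw [hmod] at h2
      exact h2 (btw_self_left _ _)
    have hinj : toIocMod hp x y = toIocMod hp x z ↔ y ≡ z [PMOD (2 * Real.pi)] := by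
      rw [toIocMod_eq_toIocMod, AddCommGroup.modEq_iff_eq_add_zsmul]
      exact exists_congr fun n => by constructor <;> intro h <;> linarith [h, (zsmul_eq_mul (2*Real.pi) n)] 
    have hc : toIocMod hp x z < x + 2 * Real.pi := by
      refine lt_of_le_of_ne hbz.2 fun h => hxz ?_
      exact (AddCommGroup.modEq_iff_toIocMod_eq_right hp).2 h
    have hb : toIcoMod hp x y ≤ toIocMod hp x z := QuotientAddGroup.btw_coe_iff.mp h1
    rw [(AddCommGroup.not_modEq_iff_toIcoMod_eq_toIocMod hp).1 hxy] at hb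
    refine ⟨lt_of_le_of_ne hb fun h => hyz (hinj.mp h), hc⟩
  · rintro ⟨h1, h2⟩
    have hxz : ¬ x ≡ z [PMOD (2 * Real.pi)] := fun hmod => by
      rw [(AddCommGroup.modEq_iff_toIocMod_eq_right hp).1 hmod] at h2
      exact lt_irrefl _ h2
    have hxy : ¬ x ≡ y [PMOD (2 * Real.pi)] := fun hmod => by
      rw [(AddCommGroup.modEq_iff_toIocMod_eq_right hp).1 hmod] at h1
      exact absurd (h1.trans h2) (lt_irrefl _)
    have hinj : toIocMod hp x y = toIocMod hp x z ↔ y ≡ z [PMOD (2 * Real.pi)] := by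
      rw [toIocMod_eq_toIocMod, AddCommGroup.modEq_iff_eq_add_zsmul]
      exact exists_congr fun n => by constructor <;> intro h <;> linarith [h, (zsmul_eq_mul (2*Real.pi) n)]
    have hyz : ¬ y ≡ z [PMOD (2 * Real.pi)] := fun hmod => by
      rw [hinj.2 hmod] at h1
      exact lt_irrefl _ h1
    have btw1 : btw (x : AddCircle (2 * Real.pi)) y z := by
      rw [QuotientAddGroup.btw_coe_iff, (AddCommGroup.not_modEq_iff_toIcoMod_eq_toIocMod hp).1 hxy]
      exact h1.le
    refine ⟨btw1, fun hb => ?_⟩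
    rcases btw_antisymm btw1 hb with h | h | h
    · exact hxy (modeq_iff_coe_eq.2 h.symm)
    · exact hyz (modeq_iff_coe_eq.2 h.symm)
    · exact hxz (modeq_iff_coe_eq.2 h)


lemma dist_coe_le (X Y : ℝ) : dist (X : AddCircle (2 * Real.pi)) (Y : AddCircle (2 * Real.pi)) ≤ |X - Y| := by
  rw [dist_eq_norm]
  have : (X : AddCircle (2 * Real.pi)) - (Y : AddCircle (2 * Real.pi)) = ((X - Y : ℝ) : AddCircle (2 * Real.pi)) := by
    norm_cast
  rw [this]
  simpa using (QuotientAddGroup.norm_mk_le_norm : ‖((X - Y : ℝ) : AddCircle (2 * Real.pi))‖ ≤ ‖X - Y‖)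

lemma dist_coe_ge (X Y : ℝ) (h1 : 0 < X - Y) (h2 : X - Y ≤ 2 * Real.pi) :
    min (X - Y) (2 * Real.pi - (X - Y)) ≤ dist (X : AddCircle (2 * Real.pi)) (Y : AddCircle (2 * Real.pi)) := by
  rw [dist_eq_norm]
  have heq : (X : AddCircle (2 * Real.pi)) - (Y : AddCircle (2 * Real.pi)) = ((X - Y : ℝ) : AddCircle (2 * Real.pi)) := by
    norm_cast
  rw [heq, AddCircle.norm_eq]
  set d := X - Y with hd
  set m := round ((2 * Real.pi)⁻¹ * d) with hm
  rcases le_or_gt m 0 with h | h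
  · have : (m : ℝ) * (2 * Real.pi) ≤ 0 := by
      apply mul_nonpos_of_nonpos_of_nonneg
      · exact_mod_cast Int.cast_nonpos.mpr h
      · positivity
    have : d ≤ d - m * (2 * Real.pi) := by linarith
    calc min d (2 * Real.pi - d) ≤ d := min_le_left _ _
      _ ≤ |d - m * (2 * Real.pi)| := le_trans this (le_abs_self _)
  · have h1' : (1 : ℝ) ≤ m := by exact_mod_cast h
    have : (m : ℝ) * (2 * Real.pi) ≥ 2 * Real.pi := by nlinarith [Real.two_pi_pos]
    calc min d (2 * Real.pi - d) ≤ 2 * Real.pi - d := min_le_right _ _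
      _ ≤ m * (2 * Real.pi) - d := by linarith
      _ ≤ |d - m * (2 * Real.pi)| := by rw [abs_sub_comm]; exact le_abs_self _


def Dy : Set ℝ := {x | ∃ (a : ℤ) (n : ℕ), x = (a : ℝ) * Real.pi / 2 ^ n}

lemma grid_mem_Dy (a : ℤ) (n : ℕ) : (a : ℝ) * Real.pi / 2 ^ n ∈ Dy := ⟨a, n, rfl⟩

lemma zero_mem_Dy : (0 : ℝ) ∈ Dy := ⟨0, 0, by norm_num⟩

lemma pi_mem_Dy : Real.pi ∈ Dy := ⟨1, 0, by norm_num⟩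

lemma Dy_add_int_mul (k : ℤ) {x : ℝ} (hx : x ∈ Dy) : x + (k : ℝ) * (2 * Real.pi) ∈ Dy := by
  obtain ⟨a, n, rfl⟩ := hx
  refine ⟨a + k * 2 ^ (n + 1), n, ?_⟩
  have h2 : (2:ℝ) ^ n ≠ 0 := by positivity
  push_cast
  field_simp
  ring

lemma grid_floor (n : ℕ) (x : ℝ) :
    ∃ a : ℤ, (a : ℝ) * Real.pi / 2 ^ n ≤ x ∧ x < ((a : ℝ) + 1) * Real.pi / 2 ^ n := by
  have hh : (0:ℝ) < Real.pi / 2 ^ n := by positivity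
  have h2 : (0:ℝ) < 2 ^ n := by positivity
  have hpi : (0:ℝ) < Real.pi := Real.pi_pos
  refine ⟨⌊x * 2 ^ n / Real.pi⌋, ?_, ?_⟩
  · have h := Int.floor_le (x * 2 ^ n / Real.pi)
    rw [div_le_iff₀ h2]
    have := mul_le_mul_of_nonneg_right h hpi.le
    rw [div_mul_cancel₀] at this
    · linarith
    · exact hpi.ne'
  · have h := Int.lt_floor_add_one (x * 2 ^ n / Real.pi)
    rw [lt_div_iff₀ h2]
    have := mul_lt_mul_of_pos_right h hpi
    rw [div_mul_cancel₀] at this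
    · linarith
    · exact hpi.ne'

lemma exists_pow_gt (ε : ℝ) (hε : 0 < ε) : ∃ n : ℕ, Real.pi / 2 ^ n < ε := by
  obtain ⟨n, hn⟩ := pow_unbounded_of_one_lt (Real.pi / ε) (by norm_num : (1:ℝ) < 2)
  have h2 : (0:ℝ) < 2 ^ n := by positivity
  have : Real.pi < 2 ^ n * ε := by
    rw [div_lt_iff₀ hε] at hn
    linarith
  exact ⟨n, by rw [div_lt_iff₀ h2]; linarith⟩

lemma exists_dyadic_le (x ε : ℝ) (hε : 0 < ε) : ∃ q ∈ Dy, q ≤ x ∧ x - q < ε := by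
  obtain ⟨n, hn⟩ := exists_pow_gt ε hε
  obtain ⟨a, h1, h2⟩ := grid_floor n x
  refine ⟨_, grid_mem_Dy a n, h1, ?_⟩
  have : ((a:ℝ) + 1) * Real.pi / 2 ^ n = (a:ℝ) * Real.pi / 2^n + Real.pi / 2^n := by ring
  rw [this] at h2
  linarith

lemma exists_dyadic_gt (x ε : ℝ) (hε : 0 < ε) : ∃ q ∈ Dy, x < q ∧ q - x < ε := by
  obtain ⟨n, hn⟩ := exists_pow_gt (ε/2) (by positivity)
  obtain ⟨a, h1, h2⟩ := grid_floor n x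
  refine ⟨((a:ℝ)+1) * Real.pi / 2 ^ n, by exact_mod_cast grid_mem_Dy (a+1) n, h2, ?_⟩
  have : ((a:ℝ) + 1) * Real.pi / 2 ^ n = (a:ℝ) * Real.pi / 2^n + Real.pi / 2^n := by ring
  rw [this]
  linarith


lemma coe_add_int_mul (A : ℝ) (k : ℤ) : ((A + (k:ℝ) * (2 * Real.pi) : ℝ) : AddCircle (2 * Real.pi)) = (A : AddCircle (2 * Real.pi)) :=
  QuotientAddGroup.eq.2 ⟨-k, by show (-k : ℤ) • (2*Real.pi) = _; rw [zsmul_eq_mul]; push_cast; ring⟩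

lemma mem_DyadicQ {u : ℝ} (hu : u ∈ Dy) : ((u : ℝ) : AddCircle (2 * Real.pi)) ∈ DyadicQ := by
  obtain ⟨a, n, rfl⟩ := hu; exact ⟨a, n, rfl⟩

lemma coe_Dy_eq_zero_iff {u : ℝ} (h1 : 0 ≤ u) (h2 : u < 2 * Real.pi) :
    ((u : ℝ) : AddCircle (2 * Real.pi)) = ((0:ℝ) : AddCircle (2 * Real.pi)) ↔ u = 0 := by
  constructor
  · intro h
    rcases QuotientAddGroup.eq.1 h with ⟨k, hk⟩
    simp only [zsmul_eq_mul] at hk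
    -- k * (2π) = -u + 0
    have hu : u = -(k:ℝ) * (2 * Real.pi) := by linarith
    rcases lt_trichotomy k 0 with hk0 | hk0 | hk0
    · have : (1:ℝ) ≤ -(k:ℝ) := by exact_mod_cast Int.le_neg_of_le_neg (by omega : k ≤ -1)
      nlinarith [Real.two_pi_pos]
    · simp [hk0] at hu; linarith
    · have : (1:ℝ) ≤ (k:ℝ) := by exact_mod_cast hk0
      nlinarith [Real.two_pi_pos]
  · rintro rfl; norm_num


section lift
variable (G : ℝ → ℝ) (hc : Continuous G) (hsm : StrictMono G)
  (hper : ∀ x, G (x + 2 * Real.pi) = G x + 2 * Real.pi)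

include hper in
lemma lift_perk : ∀ (k : ℤ) (x : ℝ), G (x + (k : ℝ) * (2 * Real.pi)) = G x + (k : ℝ) * (2 * Real.pi) := by
  intro k
  induction k using Int.induction_on with
  | zero => simp
  |succ n ih=> intro x
               push_cast at ih ⊢
               have h1 := hper (x + n * (2*Real.pi))
               have h2 := ih x
               rw [show x + ((n:ℝ)+1) * (2*Real.pi) = x + (n:ℝ) * (2*Real.pi) + 2*Real.pi by ring, h1, h2]
               ring
  |pred n ih=> intro x
               have := hper (x + (-(n:ℝ)-1) * (2*Real.pi))
               rw [show x + (-(n:ℝ)-1) * (2*Real.pi) + 2*Real.pi = x + (-(n:ℝ)) * (2*Real.pi) by ring] at this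
               have h2 := ih x
               push_cast at h2 this ⊢
               linarith

include hc hsm hper in
lemma lift_surj : Function.Surjective G := by
  have hb : ∀ x : ℝ, G x ≥ x + (G 0 - 2 * Real.pi) ∧ G x ≤ x + (G 0 + 2 * Real.pi) := by
    intro x
    set k := ⌊x / (2 * Real.pi)⌋ with hk
    have h1 : (k:ℝ) * (2*Real.pi) ≤ x := by
      rw [← le_div_iff₀ hp]; exact Int.floor_le _
    have h2 : x < ((k:ℝ)+1) * (2*Real.pi) := by
      rw [← div_lt_iff₀ hp]; push_cast; exact Int.lt_floor_add_one _
    have hl : G ((k:ℝ) * (2*Real.pi)) ≤ G x := hsm.monotone (by linarith)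
    have hr : G x ≤ G (((k:ℝ)+1) * (2*Real.pi)) := hsm.monotone (by linarith)
    have e1 : G ((k:ℝ) * (2*Real.pi)) = G 0 + k * (2*Real.pi) := by
      have := lift_perk G hper k 0; simpa using this
    have e2 : G (((k:ℝ)+1) * (2*Real.pi)) = G 0 + ((k:ℝ)+1) * (2*Real.pi) := by
      have := lift_perk G hper (k+1) 0; push_cast at this; simpa using this
    constructor <;> [linarith; nlinarith [Real.two_pi_pos]]
  apply Continuous.surjective hc
  · apply Filter.tendsto_atTop_mono (fun x => (hb x).1)
    exact Filter.tendsto_atTop_add_const_right _ _ Filter.tendsto_id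
  · apply Filter.tendsto_atBot_mono (fun x => (hb x).2)
    exact Filter.tendsto_atBot_add_const_right _ _ Filter.tendsto_id

end lift

lemma homeo_of_lift (G : ℝ → ℝ) (hc : Continuous G) (hsm : StrictMono G)
    (hper : ∀ x, G (x + 2 * Real.pi) = G x + 2 * Real.pi) :
    ∃ ψ : AddCircle (2 * Real.pi) ≃ₜ AddCircle (2 * Real.pi),
      (∀ x : ℝ, ψ ((x : ℝ) : AddCircle (2 * Real.pi)) = ((G x : ℝ) : AddCircle (2 * Real.pi))) ∧
      (∀ x y z : AddCircle (2 * Real.pi), sbtw x y z → sbtw (ψ x) (ψ y) (ψ z)) := by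
  have hsurj := lift_surj G hc hsm hper
  set Gio := hsm.orderIsoOfSurjective G hsurj with hGio
  have hGio_apply : ∀ x, Gio x = G x := fun _ => rfl
  have hsymm_per : ∀ y, Gio.symm (y + 2 * Real.pi) = Gio.symm y + 2 * Real.pi := by
    intro y
    apply hsm.injective
    have h1 : G (Gio.symm (y + 2*Real.pi)) = y + 2*Real.pi := Gio.apply_symm_apply _
    have h2 : G (Gio.symm y) = y := Gio.apply_symm_apply _
    rw [h1, hper, h2]
  -- well-definedness
  have hwd : ∀ (a b : ℝ), (QuotientAddGroup.leftRel (AddSubgroup.zmultiples (2*Real.pi))) a b →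
      ((G a : ℝ) : AddCircle (2*Real.pi)) = ((G b : ℝ) : AddCircle (2*Real.pi)) := by
    intro a b hab
    rw [QuotientAddGroup.leftRel_apply, AddSubgroup.mem_zmultiples_iff] at hab
    obtain ⟨k, hk⟩ := hab
    have hb : b = a + (k:ℝ) * (2*Real.pi) := by
      have := hk
      rw [zsmul_eq_mul] at this
      linarith
    rw [hb, lift_perk G hper k a]
    rw [QuotientAddGroup.eq, AddSubgroup.mem_zmultiples_iff]
    exact ⟨k, by rw [zsmul_eq_mul]; push_cast; ring⟩
  have hwd' : ∀ (a b : ℝ), (QuotientAddGroup.leftRel (AddSubgroup.zmultiples (2*Real.pi))) a b →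
      ((Gio.symm a : ℝ) : AddCircle (2*Real.pi)) = ((Gio.symm b : ℝ) : AddCircle (2*Real.pi)) := by
    intro a b hab
    rw [QuotientAddGroup.leftRel_apply, AddSubgroup.mem_zmultiples_iff] at hab
    obtain ⟨k, hk⟩ := hab
    have hb : b = a + (k:ℝ) * (2*Real.pi) := by
      have := hk; rw [zsmul_eq_mul] at this; linarith
    have hsymm_perk : ∀ (k : ℤ) (y : ℝ), Gio.symm (y + (k:ℝ) * (2*Real.pi)) = Gio.symm y + (k:ℝ) * (2*Real.pi) := by
      intro k y
      apply hsm.injective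
      have h1 : ∀ t, G (Gio.symm t) = t := fun t => Gio.apply_symm_apply t
      rw [h1, lift_perk G hper k, h1]
    rw [hb, hsymm_perk k a, QuotientAddGroup.eq, AddSubgroup.mem_zmultiples_iff]
    exact ⟨k, by rw [zsmul_eq_mul]; push_cast; ring⟩
  refine ⟨⟨⟨fun q => Quotient.liftOn' q (fun x => ((G x : ℝ) : AddCircle (2*Real.pi))) hwd,
           fun q => Quotient.liftOn' q (fun y => ((Gio.symm y : ℝ) : AddCircle (2*Real.pi))) hwd',
           ?_, ?_⟩, ?_, ?_⟩, ?_, ?_⟩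
  · intro q
    induction q using Quotient.inductionOn' with
    | h x => show ((Gio.symm (G x) : ℝ) : AddCircle (2*Real.pi)) = _
             rw [show Gio.symm (G x) = x from Gio.symm_apply_apply x]
  · intro q
    induction q using Quotient.inductionOn' with
    | h y => show ((G (Gio.symm y) : ℝ) : AddCircle (2*Real.pi)) = _
             rw [show G (Gio.symm y) = y from Gio.apply_symm_apply y]
  · exact Continuous.quotient_liftOn' (continuous_quotient_mk'.comp hc) hwd
  · have hcs : Continuous (Gio.symm : ℝ → ℝ) := (Gio.toHomeomorph).symm.continuous
    exact Continuous.quotient_liftOn' (continuous_quotient_mk'.comp hcs) hwd'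
  · intro x; rfl
  · -- sbtw preservation
    have key : ∀ X Y : ℝ, toIocMod hp (G X) (G Y) = G (toIocMod hp X Y) := by
      intro X Y
      rw [toIocMod_eq_iff hp]
      constructor
      · have hm := toIocMod_mem_Ioc hp X Y
        exact ⟨hsm hm.1, by
          have := hsm.monotone hm.2
          rwa [hper X] at this⟩
      · refine ⟨toIocDiv hp X Y, ?_⟩
        have hY : toIocMod hp X Y + toIocDiv hp X Y • (2*Real.pi) = Y := toIocMod_add_toIocDiv_zsmul hp X Y
        have := lift_perk G hper (toIocDiv hp X Y) (toIocMod hp X Y)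
        rw [zsmul_eq_mul] at hY ⊢
        calc G Y = G (toIocMod hp X Y + (toIocDiv hp X Y : ℝ) * (2*Real.pi)) := by rw [hY]
          _ = _ := this
    intro x y z hs
    induction x using Quotient.inductionOn' with | h X => ?_
    induction y using Quotient.inductionOn' with | h Y => ?_
    induction z using Quotient.inductionOn' with | h Z => ?_
    have hX : (Quotient.mk'' X : AddCircle (2*Real.pi)) = ((X : ℝ) : AddCircle (2*Real.pi)) := rfl
    rw [hX] at hs
    rw [show (Quotient.mk'' Y : AddCircle (2*Real.pi)) = ((Y : ℝ) : AddCircle (2*Real.pi)) from rfl] at hs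
    rw [show (Quotient.mk'' Z : AddCircle (2*Real.pi)) = ((Z : ℝ) : AddCircle (2*Real.pi)) from rfl] at hs
    rw [sbtw_coe_iff] at hs
    show sbtw ((G X : ℝ) : AddCircle (2*Real.pi)) ((G Y : ℝ) : AddCircle (2*Real.pi)) ((G Z : ℝ) : AddCircle (2*Real.pi))
    rw [sbtw_coe_iff, key, key]
    refine ⟨hsm hs.1, ?_⟩
    have := hsm hs.2
    rwa [hper X] at this


section phi
variable (φ : AddCircle (2 * Real.pi) → AddCircle (2 * Real.pi))

noncomputable def t0 : ℝ := Quotient.out (φ (((0:ℝ)) : AddCircle (2 * Real.pi)))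

noncomputable def gl : ℝ → ℝ := fun x =>
  toIcoMod hp (t0 φ) (Quotient.out (φ ((x : ℝ) : AddCircle (2 * Real.pi)))) + (⌊x / (2 * Real.pi)⌋ : ℝ) * (2 * Real.pi)

lemma coe_t0 : ((t0 φ : ℝ) : AddCircle (2 * Real.pi)) = φ (((0:ℝ)) : AddCircle (2 * Real.pi)) :=
  Quotient.out_eq' _

lemma coe_gl (x : ℝ) : ((gl φ x : ℝ) : AddCircle (2 * Real.pi)) = φ ((x : ℝ) : AddCircle (2 * Real.pi)) := by
  unfold gl
  rw [coe_add_int_mul]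
  set b := Quotient.out (φ ((x : ℝ) : AddCircle (2 * Real.pi))) with hb
  have h1 : ((toIcoMod hp (t0 φ) b : ℝ) : AddCircle (2 * Real.pi)) = (b : AddCircle (2 * Real.pi)) := by
    apply QuotientAddGroup.eq.2
    refine ⟨toIcoDiv hp (t0 φ) b, ?_⟩
    show (toIcoDiv hp (t0 φ) b) • (2*Real.pi) = _
    have := toIcoMod_add_toIcoDiv_zsmul hp (t0 φ) b
    simp only [zsmul_eq_mul] at this ⊢
    linarith
  rw [h1, hb]
  exact Quotient.out_eq' _

lemma gl_mem_Ico (x : ℝ) (h1 : 0 ≤ x) (h2 : x < 2 * Real.pi) :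
    gl φ x ∈ Set.Ico (t0 φ) (t0 φ + 2 * Real.pi) := by
  have hf : ⌊x / (2 * Real.pi)⌋ = 0 := by
    apply Int.floor_eq_zero_iff.2
    constructor
    · positivity
    · rw [div_lt_one hp]; exact h2
  unfold gl
  rw [hf]
  simpa using toIcoMod_mem_Ico hp (t0 φ) _

lemma gl_periodic (x : ℝ) : gl φ (x + 2 * Real.pi) = gl φ x + 2 * Real.pi := by
  unfold gl
  have hco : ((x + 2 * Real.pi : ℝ) : AddCircle (2 * Real.pi)) = (x : AddCircle (2 * Real.pi)) := by
    have := coe_add_int_mul x 1; push_cast at this; convert this using 2; ring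
  rw [hco]
  have hfl : ⌊(x + 2 * Real.pi) / (2 * Real.pi)⌋ = ⌊x / (2 * Real.pi)⌋ + 1 := by
    rw [show (x + 2 * Real.pi) / (2 * Real.pi) = x / (2 * Real.pi) + 1 by field_simp]
    exact Int.floor_add_one _
  rw [hfl]
  push_cast
  ring

lemma gl_zero : gl φ 0 = t0 φ := by
  unfold gl
  rw [show ((0:ℝ) : AddCircle (2*Real.pi)) = (((0:ℝ)) : AddCircle (2*Real.pi)) from rfl]
  rw [show Quotient.out (φ (((0:ℝ)) : AddCircle (2 * Real.pi))) = t0 φ from rfl]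
  rw [toIcoMod_apply_left]
  norm_num


variable (hinj : Set.InjOn φ DyadicQ)
    (hord : ∀ x ∈ DyadicQ, ∀ y ∈ DyadicQ, ∀ z ∈ DyadicQ,
      sbtw x y z → sbtw (φ x) (φ y) (φ z))

include hinj in
lemma gl_ne_t0 {u : ℝ} (hu : u ∈ Dy) (h1 : 0 < u) (h2 : u < 2 * Real.pi) : gl φ u ≠ t0 φ := by
  intro h
  have hcoe : φ ((u : ℝ) : AddCircle (2*Real.pi)) = φ (((0:ℝ)) : AddCircle (2*Real.pi)) := by
    calc φ ((u : ℝ) : AddCircle (2*Real.pi)) = ((gl φ u : ℝ) : AddCircle (2*Real.pi)) := (coe_gl φ u).symm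
      _ = ((t0 φ : ℝ) : AddCircle (2*Real.pi)) := by rw [h]
      _ = _ := coe_t0 φ
  have := hinj (mem_DyadicQ hu) (mem_DyadicQ zero_mem_Dy) hcoe
  rw [coe_Dy_eq_zero_iff h1.le h2] at this
  exact absurd this h1.ne'

lemma toIocMod_eq_self' {a b : ℝ} (h : b ∈ Set.Ioc a (a + 2 * Real.pi)) : toIocMod hp a b = b :=
  (toIocMod_eq_iff hp).2 ⟨h, 0, by simp⟩

include hinj hord in
lemma gl_strict_core {u v : ℝ} (hu : u ∈ Dy) (hv : v ∈ Dy) (h0 : 0 ≤ u) (huv : u < v)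
    (hv2 : v < 2 * Real.pi) : gl φ u < gl φ v := by
  have hIv := gl_mem_Ico φ v (h0.trans huv.le) hv2
  have hnev := gl_ne_t0 φ hinj hv (h0.trans_lt huv) hv2
  have hvIoc : gl φ v ∈ Set.Ioc (t0 φ) (t0 φ + 2 * Real.pi) :=
    ⟨lt_of_le_of_ne hIv.1 (Ne.symm hnev), hIv.2.le⟩
  rcases eq_or_lt_of_le h0 with rfl | h0'
  · rw [gl_zero]
    exact hvIoc.1
  · -- 0 < u < v < 2π
    have hIu := gl_mem_Ico φ u h0 (huv.trans hv2)
    have hneu := gl_ne_t0 φ hinj hu h0' (huv.trans hv2)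
    have huIoc : gl φ u ∈ Set.Ioc (t0 φ) (t0 φ + 2 * Real.pi) :=
      ⟨lt_of_le_of_ne hIu.1 (Ne.symm hneu), hIu.2.le⟩
    have hs : sbtw ((0:ℝ) : AddCircle (2*Real.pi)) ((u:ℝ) : AddCircle (2*Real.pi)) ((v:ℝ) : AddCircle (2*Real.pi)) := by
      rw [sbtw_coe_iff]
      rw [toIocMod_eq_self' ⟨h0', by linarith⟩, toIocMod_eq_self' ⟨h0.trans_lt huv, by linarith⟩]
      exact ⟨huv, by linarith⟩
    have hs2 := hord _ (mem_DyadicQ zero_mem_Dy) _ (mem_DyadicQ hu) _ (mem_DyadicQ hv) hs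
    rw [← coe_gl φ 0, ← coe_gl φ u, ← coe_gl φ v, gl_zero] at hs2
    rw [sbtw_coe_iff] at hs2
    rw [toIocMod_eq_self' huIoc, toIocMod_eq_self' hvIoc] at hs2
    exact hs2.1

include hinj hord in
lemma gl_strictMonoOn {u v : ℝ} (hu : u ∈ Dy) (hv : v ∈ Dy) (huv : u < v) : gl φ u < gl φ v := by
  have hperk := lift_perk (gl φ) (gl_periodic φ)
  set k := ⌊u / (2 * Real.pi)⌋ with hk
  have hk1 : (k:ℝ) * (2*Real.pi) ≤ u := by
    rw [← le_div_iff₀ hp]; exact Int.floor_le _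
  have hk2 : u < ((k:ℝ)+1) * (2*Real.pi) := by
    rw [← div_lt_iff₀ hp]; push_cast; exact Int.lt_floor_add_one _
  have huDy' : u - (k:ℝ) * (2*Real.pi) ∈ Dy := by
    have h := Dy_add_int_mul (-k) hu
    have he : u + ((-k : ℤ):ℝ) * (2*Real.pi) = u - (k:ℝ) * (2*Real.pi) := by push_cast; ring
    rwa [he] at h
  have hvDy' : v - (k:ℝ) * (2*Real.pi) ∈ Dy := by
    have h := Dy_add_int_mul (-k) hv
    have he : v + ((-k : ℤ):ℝ) * (2*Real.pi) = v - (k:ℝ) * (2*Real.pi) := by push_cast; ring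
    rwa [he] at h
  have hglu : gl φ u = gl φ (u - (k:ℝ) * (2*Real.pi)) + (k:ℝ) * (2*Real.pi) := by
    have h := hperk k (u - (k:ℝ) * (2*Real.pi))
    rw [show u - (k:ℝ) * (2*Real.pi) + (k:ℝ) * (2*Real.pi) = u by ring] at h
    exact h
  have hglv : gl φ v = gl φ (v - (k:ℝ) * (2*Real.pi)) + (k:ℝ) * (2*Real.pi) := by
    have h := hperk k (v - (k:ℝ) * (2*Real.pi))
    rw [show v - (k:ℝ) * (2*Real.pi) + (k:ℝ) * (2*Real.pi) = v by ring] at h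
    exact h
  rw [hglu, hglv]
  have hu'0 : 0 ≤ u - (k:ℝ) * (2*Real.pi) := by linarith
  have hu'2 : u - (k:ℝ) * (2*Real.pi) < 2 * Real.pi := by linarith
  have hu'v' : u - (k:ℝ) * (2*Real.pi) < v - (k:ℝ) * (2*Real.pi) := by linarith
  have key : gl φ (u - (k:ℝ) * (2*Real.pi)) < gl φ (v - (k:ℝ) * (2*Real.pi)) := by
    rcases lt_or_ge (v - (k:ℝ) * (2*Real.pi)) (2 * Real.pi) with hc | hc
    · exact gl_strict_core φ hinj hord huDy' hvDy' hu'0 hu'v' hc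
    · set w := v - (k:ℝ) * (2*Real.pi) with hw
      set m := ⌊w / (2 * Real.pi)⌋ with hm
      have hm1 : (m:ℝ) * (2*Real.pi) ≤ w := by
        rw [← le_div_iff₀ hp]; exact Int.floor_le _
      have hm2 : w < ((m:ℝ)+1) * (2*Real.pi) := by
        rw [← div_lt_iff₀ hp]; push_cast; exact Int.lt_floor_add_one _
      have hm_ge : (1:ℝ) ≤ (m:ℝ) := by
        have h1m : (1:ℤ) ≤ m := by
          rw [hm]
          apply Int.le_floor.2
          push_cast
          rw [le_div_iff₀ hp]
          linarith
        exact_mod_cast h1m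
      have hglw : gl φ w = gl φ (w - (m:ℝ) * (2*Real.pi)) + (m:ℝ) * (2*Real.pi) := by
        have h := hperk m (w - (m:ℝ) * (2*Real.pi))
        rw [show w - (m:ℝ) * (2*Real.pi) + (m:ℝ) * (2*Real.pi) = w by ring] at h
        exact h
      have hIw := gl_mem_Ico φ (w - (m:ℝ) * (2*Real.pi)) (by linarith) (by linarith)
      have hIu' := gl_mem_Ico φ (u - (k:ℝ) * (2*Real.pi)) hu'0 hu'2
      rw [hglw]
      have h1 := hIw.1
      have h2 := hIu'.2
      nlinarith [Real.two_pi_pos]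
  linarith


include hinj hord in
lemma gl_uc
    (hφ : ∀ ε > 0, ∃ n : ℕ, ∀ a : ℤ,
      dist (φ (((a : ℝ) * Real.pi / 2 ^ n : ℝ) : AddCircle (2 * Real.pi)))
        (φ ((((a : ℝ) - 1) * Real.pi / 2 ^ n : ℝ) : AddCircle (2 * Real.pi))) < ε) :
    ∀ ε > 0, ∃ n : ℕ, ∀ u ∈ Dy, ∀ v ∈ Dy, u ≤ v → v - u ≤ Real.pi / 2 ^ n →
      gl φ v - gl φ u < ε := by
  have hmono : ∀ u ∈ Dy, ∀ v ∈ Dy, u ≤ v → gl φ u ≤ gl φ v := by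
    intro u hu v hv huv
    rcases eq_or_lt_of_le huv with rfl | h
    · exact le_refl _
    · exact (gl_strictMonoOn φ hinj hord hu hv h).le
  intro ε hε
  -- positivity of D0
  have hpine : ((Real.pi : ℝ) : AddCircle (2 * Real.pi)) ≠ ((0:ℝ) : AddCircle (2 * Real.pi)) := by
    rw [Ne, coe_Dy_eq_zero_iff Real.pi_pos.le (by linarith [Real.pi_pos])]
    exact Real.pi_ne_zero
  have hφne : φ ((Real.pi : ℝ) : AddCircle (2 * Real.pi)) ≠ φ (((0:ℝ)) : AddCircle (2 * Real.pi)) :=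
    fun h => hpine (hinj (mem_DyadicQ pi_mem_Dy) (mem_DyadicQ zero_mem_Dy) h)
  set D0 := dist (φ ((Real.pi : ℝ) : AddCircle (2 * Real.pi))) (φ (((0:ℝ)) : AddCircle (2 * Real.pi))) with hD0def
  have hD0 : 0 < D0 := dist_pos.2 hφne
  set ε' := min (ε/2) (D0/2) with hε'def
  have hε' : 0 < ε' := lt_min (by linarith) (by linarith)
  obtain ⟨n, hn⟩ := hφ ε' hε'
  refine ⟨n, ?_⟩
  set h := Real.pi / 2 ^ n with hhdef
  have hh : 0 < h := by positivity
  have hgrid : ∀ a : ℤ, (a:ℝ) * h ∈ Dy := by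
    intro a; rw [hhdef, mul_div_assoc'] ; exact grid_mem_Dy a n
  have hNh : ((2:ℝ))^(n+1) * h = 2 * Real.pi := by
    rw [hhdef]; field_simp; ring
  have h2pi_Dy : (2 * Real.pi : ℝ) ∈ Dy := by
    have := Dy_add_int_mul 1 zero_mem_Dy
    push_cast at this
    simpa using this
  have hgl2pi : gl φ (2 * Real.pi) = gl φ 0 + 2 * Real.pi := by
    have := gl_periodic φ 0; simpa using this
  have hperk := lift_perk (gl φ) (gl_periodic φ)
  -- the claim for all integers
  have claim : ∀ a : ℤ, gl φ ((a:ℝ) * h) - gl φ (((a:ℝ) - 1) * h) < ε' := by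
    have main : ∀ b : ℤ, 1 ≤ b → b ≤ 2^(n+1) → gl φ ((b:ℝ) * h) - gl φ (((b:ℝ) - 1) * h) < ε' := by
      intro b hb1 hbN
      have hb1' : (1:ℝ) ≤ (b:ℝ) := by exact_mod_cast hb1
      have hbN' : (b:ℝ) ≤ 2^(n+1) := by exact_mod_cast hbN
      have hb1Dy : ((b:ℝ) - 1) * h ∈ Dy := by
        have := hgrid (b-1); push_cast at this; exact this
      have hbDy : (b:ℝ) * h ∈ Dy := hgrid b
      have hlow : gl φ 0 ≤ gl φ (((b:ℝ) - 1) * h) :=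
        hmono 0 zero_mem_Dy _ hb1Dy (by nlinarith)
      have hhigh : gl φ ((b:ℝ) * h) ≤ gl φ (2 * Real.pi) :=
        hmono _ hbDy _ h2pi_Dy (by nlinarith)
      have hδpos : 0 < gl φ ((b:ℝ) * h) - gl φ (((b:ℝ) - 1) * h) := by
        have := gl_strictMonoOn φ hinj hord hb1Dy hbDy (by nlinarith)
        linarith
      have hδle : gl φ ((b:ℝ) * h) - gl φ (((b:ℝ) - 1) * h) ≤ 2 * Real.pi := by
        rw [hgl2pi] at hhigh; linarith
      have hdistb := hn b
      rw [show (b:ℝ) * Real.pi / 2^n = (b:ℝ) * h by rw [hhdef]; ring,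
          show ((b:ℝ) - 1) * Real.pi / 2^n = ((b:ℝ) - 1) * h by rw [hhdef]; ring] at hdistb
      rw [← coe_gl φ ((b:ℝ) * h), ← coe_gl φ (((b:ℝ) - 1) * h)] at hdistb
      have hmin := (dist_coe_ge _ _ hδpos hδle).trans_lt hdistb
      rcases lt_or_ge (gl φ ((b:ℝ) * h) - gl φ (((b:ℝ) - 1) * h)) ε' with hgood | hbad
      · exact hgood
      · exfalso
        have h2πδ : 2 * Real.pi - (gl φ ((b:ℝ) * h) - gl φ (((b:ℝ) - 1) * h)) < ε' := by
          rcases min_lt_iff.1 hmin with hc | hc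
          · linarith
          · exact hc
        -- c := gl π - gl 0
        have hπh : ((2:ℝ)^n) * h = Real.pi := by rw [hhdef]; field_simp
        have hc0 : gl φ 0 < gl φ Real.pi :=
          gl_strictMonoOn φ hinj hord zero_mem_Dy pi_mem_Dy Real.pi_pos
        have hc2 : gl φ Real.pi < gl φ 0 + 2 * Real.pi := by
          have := (gl_mem_Ico φ Real.pi Real.pi_pos.le (by linarith [Real.pi_pos])).2
          rw [gl_zero]
          linarith [(gl_mem_Ico φ Real.pi Real.pi_pos.le (by linarith [Real.pi_pos])).2]
        have hcoe2pi : ((gl φ 0 + 2 * Real.pi : ℝ) : AddCircle (2 * Real.pi)) = ((gl φ 0 : ℝ) : AddCircle (2 * Real.pi)) := by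
          have := coe_add_int_mul (gl φ 0) 1
          push_cast at this
          simpa using this
        have hD0eq : D0 = dist ((gl φ Real.pi : ℝ) : AddCircle (2 * Real.pi)) ((gl φ 0 : ℝ) : AddCircle (2 * Real.pi)) := by
          rw [hD0def, ← coe_gl φ Real.pi, ← coe_gl φ 0]
        have hε'D : ε' ≤ D0 / 2 := min_le_right _ _
        rcases le_or_gt b (2^n : ℤ) with hbs | hbs
        · -- bad interval inside [0, π]
          have hbs' : (b:ℝ) ≤ 2^n := by exact_mod_cast hbs
          have hbh : (b:ℝ) * h ≤ Real.pi := by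
            rw [← hπh]; nlinarith
          have hup : gl φ ((b:ℝ) * h) ≤ gl φ Real.pi := hmono _ hbDy _ pi_mem_Dy hbh
          have hcbig : 2 * Real.pi - (gl φ Real.pi - gl φ 0) < ε' := by linarith
          have hD0le : D0 ≤ 2 * Real.pi - (gl φ Real.pi - gl φ 0) := by
            rw [hD0eq, ← hcoe2pi]
            refine (dist_coe_le _ _).trans ?_
            rw [abs_of_nonpos (by linarith)]
            ring_nf
            linarith
          linarith
        · -- bad interval inside [π, 2π]
          have hbs' : ((2:ℝ))^n ≤ (b:ℝ) - 1 := by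
            have : (2^n : ℤ) ≤ b - 1 := by omega
            exact_mod_cast this
          have hbh : Real.pi ≤ ((b:ℝ) - 1) * h := by
            rw [← hπh]; nlinarith
          have hdown : gl φ Real.pi ≤ gl φ (((b:ℝ) - 1) * h) := hmono _ pi_mem_Dy _ hb1Dy hbh
          have hcsmall : gl φ Real.pi - gl φ 0 < ε' := by
            rw [hgl2pi] at hhigh
            linarith
          have hD0le : D0 ≤ gl φ Real.pi - gl φ 0 := by
            rw [hD0eq]
            refine (dist_coe_le _ _).trans ?_
            rw [abs_of_nonneg (by linarith)]
          linarith
    -- reduce general a to b ∈ [1, N]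
    intro a
    set N : ℤ := 2^(n+1) with hNdef
    have hNpos : 0 < N := by positivity
    set k := (a-1) / N with hkdef
    set b := (a-1) % N + 1 with hbdef
    have hb1 : 1 ≤ b := by
      have := Int.emod_nonneg (a-1) hNpos.ne'
      omega
    have hbN : b ≤ N := by
      have := Int.emod_lt_of_pos (a-1) hNpos
      omega
    have hab : a = b + N * k := by
      rw [hbdef, hkdef]
      have := Int.mul_ediv_add_emod (a-1) N
      linarith
    have hcast : ((N:ℤ):ℝ) * h = 2 * Real.pi := by
      rw [hNdef]; push_cast; exact hNh
    have e1 : (a:ℝ) * h = (b:ℝ) * h + (k:ℝ) * (2 * Real.pi) := by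
      rw [hab]; push_cast; rw [← hcast]; push_cast; ring
    have e2 : ((a:ℝ) - 1) * h = ((b:ℝ) - 1) * h + (k:ℝ) * (2 * Real.pi) := by
      rw [hab]; push_cast; rw [← hcast]; push_cast; ring
    rw [e1, e2, hperk k ((b:ℝ) * h), hperk k (((b:ℝ) - 1) * h)]
    have := main b hb1 hbN
    linarith
  -- conclude
  intro u hu v hv huv hclose
  obtain ⟨a, ha1, ha2⟩ := grid_floor n u
  rw [show (a:ℝ) * Real.pi / 2^n = (a:ℝ) * h by rw [hhdef]; ring] at ha1
  rw [show ((a:ℝ) + 1) * Real.pi / 2^n = ((a:ℝ)+1) * h by rw [hhdef]; ring] at ha2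
  have hva2 : v ≤ ((a:ℝ) + 2) * h := by nlinarith
  have hu_ge : gl φ ((a:ℝ) * h) ≤ gl φ u := hmono _ (hgrid a) _ hu ha1
  have hv_le : gl φ v ≤ gl φ (((a:ℝ) + 2) * h) := by
    have := hgrid (a+2)
    push_cast at this
    exact hmono _ hv _ this hva2
  have c1 := claim (a+1)
  have c2 := claim (a+2)
  push_cast at c1 c2
  rw [show ((a:ℝ) + 1 - 1) = (a:ℝ) by ring] at c1
  rw [show ((a:ℝ) + 2 - 1) = (a:ℝ) + 1 by ring] at c2
  have hε'2 : ε' ≤ ε/2 := min_le_left _ _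
  linarith

end phi

lemma extend_G (g : ℝ → ℝ)
    (hsm : ∀ {u v : ℝ}, u ∈ Dy → v ∈ Dy → u < v → g u < g v)
    (hper : ∀ x, g (x + 2 * Real.pi) = g x + 2 * Real.pi)
    (huc : ∀ ε > 0, ∃ n : ℕ, ∀ u ∈ Dy, ∀ v ∈ Dy, u ≤ v → v - u ≤ Real.pi / 2 ^ n →
      g v - g u < ε) :
    ∃ G : ℝ → ℝ, Continuous G ∧ StrictMono G ∧ (∀ x, G (x + 2 * Real.pi) = G x + 2 * Real.pi) ∧
      ∀ q ∈ Dy, G q = g q := by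
  have hmono : ∀ u ∈ Dy, ∀ v ∈ Dy, u ≤ v → g u ≤ g v := by
    intro u hu v hv huv
    rcases eq_or_lt_of_le huv with rfl | h
    · exact le_refl _
    · exact (hsm hu hv h).le
  set G := fun x => sSup (g '' (Dy ∩ Set.Iic x)) with hGdef
  have hne : ∀ x, (g '' (Dy ∩ Set.Iic x)).Nonempty := by
    intro x
    obtain ⟨q, hq, hqx, -⟩ := exists_dyadic_le x 1 one_pos
    exact ⟨g q, ⟨q, ⟨hq, hqx⟩, rfl⟩⟩
  have hbdd : ∀ x, BddAbove (g '' (Dy ∩ Set.Iic x)) := by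
    intro x
    obtain ⟨q', hq', hxq', -⟩ := exists_dyadic_gt x 1 one_pos
    refine ⟨g q', ?_⟩
    rintro y ⟨q, ⟨hqD, hqx⟩, rfl⟩
    exact hmono _ hqD _ hq' (hqx.trans hxq'.le)
  have hle : ∀ x, ∀ q ∈ Dy, q ≤ x → g q ≤ G x := fun x q hq hqx =>
    le_csSup (hbdd x) ⟨q, ⟨hq, hqx⟩, rfl⟩
  have hub : ∀ x, ∀ q' ∈ Dy, x ≤ q' → G x ≤ g q' := by
    intro x q' hq' hxq'
    refine csSup_le (hne x) ?_
    rintro y ⟨q, ⟨hqD, hqx⟩, rfl⟩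
    exact hmono _ hqD _ hq' (hqx.trans hxq')
  have hagree : ∀ q ∈ Dy, G q = g q := fun q hq =>
    le_antisymm (hub q q hq le_rfl) (hle q q hq le_rfl)
  have hGmono : Monotone G := by
    intro x y hxy
    exact csSup_le_csSup (hbdd y) (hne x)
      (Set.image_mono (fun t ht => ⟨ht.1, ht.2.trans hxy⟩))
  have hGper : ∀ x, G (x + 2 * Real.pi) = G x + 2 * Real.pi := by
    intro x
    apply le_antisymm
    · refine csSup_le (hne _) ?_
      rintro y ⟨q, ⟨hqD, hqx⟩, rfl⟩
      have hq' : q - 2 * Real.pi ∈ Dy := by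
        have := Dy_add_int_mul (-1) hqD
        push_cast at this
        rw [show q + -1 * (2 * Real.pi) = q - 2 * Real.pi by ring] at this
        exact this
      have heq : g q = g (q - 2 * Real.pi) + 2 * Real.pi := by
        have := hper (q - 2 * Real.pi)
        rw [show q - 2 * Real.pi + 2 * Real.pi = q by ring] at this
        linarith
      have hIic : q - 2 * Real.pi ≤ x := by
        have := Set.mem_Iic.1 hqx; linarith
      have := hle x _ hq' hIic
      linarith
    · have h1 : G x ≤ G (x + 2 * Real.pi) - 2 * Real.pi := by
        refine csSup_le (hne x) ?_
        rintro y ⟨q, ⟨hqD, hqx⟩, rfl⟩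
        have hq2 : q + 2 * Real.pi ∈ Dy := by
          have := Dy_add_int_mul 1 hqD
          push_cast at this
          rw [show q + 1 * (2 * Real.pi) = q + 2 * Real.pi by ring] at this
          exact this
        have := hle (x + 2 * Real.pi) _ hq2 (by have := Set.mem_Iic.1 hqx; linarith)
        have hpq := hper q
        linarith
      linarith
  have hGstrict : StrictMono G := by
    intro x y hxy
    obtain ⟨q1, hq1D, hxq1, hq1y⟩ := exists_dyadic_gt x ((y - x)/2) (by linarith)
    obtain ⟨q2, hq2D, hq1q2, hq2y⟩ := exists_dyadic_gt q1 (y - q1) (by linarith)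
    calc G x ≤ g q1 := hub x q1 hq1D hxq1.le
      _ < g q2 := hsm hq1D hq2D hq1q2
      _ ≤ G y := hle y q2 hq2D (by linarith)
  have hGcont : Continuous G := by
    rw [Metric.continuous_iff]
    intro b ε hε
    obtain ⟨n, hn⟩ := huc (ε/2) (by linarith)
    have hh : 0 < Real.pi / 2 ^ n := by positivity
    refine ⟨(Real.pi / 2 ^ n)/4, by positivity, ?_⟩
    intro a hab
    have key : ∀ s t : ℝ, s ≤ t → t - s < (Real.pi / 2 ^ n)/2 → G t - G s < ε/2 := by
      intro s t hst hclose
      obtain ⟨q1, hq1D, hq1s, hsq1⟩ := exists_dyadic_le s ((Real.pi / 2 ^ n)/4) (by positivity)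
      obtain ⟨q2, hq2D, htq2, hq2t⟩ := exists_dyadic_gt t ((Real.pi / 2 ^ n)/4) (by positivity)
      have h12 : q1 ≤ q2 := by linarith
      have hd : q2 - q1 ≤ Real.pi / 2 ^ n := by linarith
      have := hn q1 hq1D q2 hq2D h12 hd
      have hGs := hle s q1 hq1D hq1s
      have hGt := hub t q2 hq2D htq2.le
      linarith
    rw [Real.dist_eq] at hab ⊢
    rcases le_total a b with hab2 | hab2
    · have h1 : G a ≤ G b := hGmono hab2
      have h2 : b - a < (Real.pi / 2 ^ n)/2 := by
        rw [abs_sub_comm] at hab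
        have := le_abs_self (b - a); linarith [abs_nonneg (b-a), (abs_lt.1 hab).2]
      have := key a b hab2 h2
      rw [abs_of_nonpos (by linarith)]
      linarith
    · have h1 : G b ≤ G a := hGmono hab2
      have h2 : a - b < (Real.pi / 2 ^ n)/2 := by
        have := (abs_lt.1 hab).2; linarith
      have := key b a hab2 h2
      rw [abs_of_nonneg (by linarith)]
      linarith
  exact ⟨G, hGcont, hGstrict, hGper, hagree⟩

end Stmt11Aux

open Stmt11Aux in
/-- A cyclic-order-preserving injection φ : Q → S¹ extends to an orientation preserving
homeomorphism of S¹ if and only if for every ε > 0 there is n such that for all a ∈ ℤ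
the distance between φ(aπ/2ⁿ) and φ((a−1)π/2ⁿ) is less than ε. -/
theorem stmt11 (φ : AddCircle (2 * Real.pi) → AddCircle (2 * Real.pi))
    (hinj : Set.InjOn φ DyadicQ)
    (hord : ∀ x ∈ DyadicQ, ∀ y ∈ DyadicQ, ∀ z ∈ DyadicQ,
      sbtw x y z → sbtw (φ x) (φ y) (φ z)) :
    (∃ ψ : AddCircle (2 * Real.pi) ≃ₜ AddCircle (2 * Real.pi),
        (∀ q ∈ DyadicQ, ψ q = φ q) ∧
        (∀ x y z : AddCircle (2 * Real.pi), sbtw x y z → sbtw (ψ x) (ψ y) (ψ z))) ↔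
    (∀ ε > 0, ∃ n : ℕ, ∀ a : ℤ,
      dist (φ (((a : ℝ) * Real.pi / 2 ^ n : ℝ) : AddCircle (2 * Real.pi)))
        (φ ((((a : ℝ) - 1) * Real.pi / 2 ^ n : ℝ) : AddCircle (2 * Real.pi))) < ε) := by
  constructor
  · rintro ⟨ψ, hψeq, -⟩ ε hε
    have huc := CompactSpace.uniformContinuous_of_continuous ψ.continuous
    rw [Metric.uniformContinuous_iff] at huc
    obtain ⟨δ, hδ, hd⟩ := huc ε hε
    obtain ⟨n, hn⟩ := exists_pow_gt δ hδ
    refine ⟨n, fun a => ?_⟩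
    have hq1 : (((a:ℝ) * Real.pi / 2^n : ℝ) : AddCircle (2 * Real.pi)) ∈ DyadicQ := ⟨a, n, rfl⟩
    have hq2 : ((((a:ℝ) - 1) * Real.pi / 2^n : ℝ) : AddCircle (2 * Real.pi)) ∈ DyadicQ := by
      refine ⟨a - 1, n, ?_⟩
      push_cast
      ring_nf
    rw [← hψeq _ hq1, ← hψeq _ hq2]
    apply hd
    have hb := dist_coe_le ((a:ℝ) * Real.pi / 2^n) (((a:ℝ) - 1) * Real.pi / 2^n)
    have he : (a:ℝ) * Real.pi / 2^n - ((a:ℝ) - 1) * Real.pi / 2^n = Real.pi / 2^n := by ring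
    rw [he, abs_of_pos (by positivity)] at hb
    exact lt_of_le_of_lt hb hn
  · intro hφ
    have hsm : ∀ {u v : ℝ}, u ∈ Dy → v ∈ Dy → u < v → gl φ u < gl φ v :=
      fun hu hv huv => gl_strictMonoOn φ hinj hord hu hv huv
    have huc := gl_uc φ hinj hord hφ
    obtain ⟨G, hGc, hGsm, hGper, hGagree⟩ := extend_G (gl φ) (fun hu hv huv => hsm hu hv huv)
      (gl_periodic φ) huc
    obtain ⟨ψ, hψ1, hψ2⟩ := homeo_of_lift G hGc hGsm hGper
    refine ⟨ψ, ?_, hψ2⟩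
    rintro q ⟨a, n, rfl⟩
    rw [hψ1, hGagree _ (grid_mem_Dy a n), coe_gl]
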